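/- Let G be a multigraph with χ'(G) = k ≥ Δ(G)+1. Then any two distinct maximal k-dense subgraphs of G are vertex-disjoint. -/

import Mathlib

/-- A finite multigraph: finite vertex and edge types, each edge has an unordered pair of
endvertices, and there are no loops. -/
structure Multigraph where
  V : Type
  E : Type
  [fintypeV : Fintype V]
  [fintypeE : Fintype E]
  ends : E → Sym2 V
  loopless : ∀ e, ¬ (ends e).IsDiag

attribute [instance] Multigraph.fintypeV Multigraph.fintypeE

namespace Multigraph

section Basic

variable (G : Multigraph)

/-- The degree of a vertex: the number of edges incident with it. -/
noncomputable def degree (v : G.V) : ℕ := {e : G.E | v ∈ G.ends e}.ncard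

/-- The maximum degree Δ(G). -/
noncomputable def maxDegree : ℕ := sSup (Set.range G.degree)

/-- The number of edges joining `x` and `y` (the multiplicity e_G(x,y)). -/
noncomputable def mult (x y : G.V) : ℕ := {e : G.E | G.ends e = s(x, y)}.ncard

/-- The maximum multiplicity μ(G). -/
noncomputable def maxMult : ℕ := sSup {m : ℕ | ∃ x y : G.V, G.mult x y = m}

/-- `c` is a proper edge coloring, with palette `{1,…,k}`, of the edges in `D`
(edges sharing an endvertex get distinct colors). -/
def IsProperColoringOn (k : ℕ) (D : Set G.E) (c : G.E → ℕ) : Prop :=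
  (∀ e ∈ D, c e ∈ Set.Icc 1 k) ∧
  ∀ e ∈ D, ∀ f ∈ D, e ≠ f → (∃ v, v ∈ G.ends e ∧ v ∈ G.ends f) → c e ≠ c f

/-- A proper `k`-edge-coloring of all of `G`. -/
def IsProperColoring (k : ℕ) (c : G.E → ℕ) : Prop := G.IsProperColoringOn k Set.univ c

/-- The chromatic index of the subgraph of `G` consisting of the edges in `D`
(vertices are irrelevant for edge colorings). -/
noncomputable def chromIndexOn (D : Set G.E) : ℕ := sInf {k | ∃ c, G.IsProperColoringOn k D c}

/-- The chromatic index χ'(G). -/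
noncomputable def chromIndex : ℕ := G.chromIndexOn Set.univ

/-- The set of colors of the palette `{1,…,k}` missing at `v`, where only the edges in `D`
are regarded as colored. -/
def missingOn (k : ℕ) (D : Set G.E) (c : G.E → ℕ) (v : G.V) : Set ℕ :=
  {i | i ∈ Set.Icc 1 k ∧ ∀ e ∈ D, v ∈ G.ends e → c e ≠ i}

/-- `X` is elementary: missing-color sets of distinct vertices of `X` are disjoint. -/
def IsElementaryOn (k : ℕ) (D : Set G.E) (c : G.E → ℕ) (X : Set G.V) : Prop :=
  ∀ u ∈ X, ∀ v ∈ X, u ≠ v → G.missingOn k D c u ∩ G.missingOn k D c v = ∅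

/-- The boundary ∂_G(X): edges with an endvertex in `X` and an endvertex outside `X`. -/
def boundary (X : Set G.V) : Set G.E :=
  {e | (∃ v ∈ G.ends e, v ∈ X) ∧ (∃ v ∈ G.ends e, v ∉ X)}

/-- `X` is strongly closed (w.r.t. the coloring `c` of the edges in `D`): every color on a
boundary edge of `X` is present at every vertex of `X`, and the colors on the boundary edges
are pairwise distinct. -/
def IsStronglyClosedOn (D : Set G.E) (c : G.E → ℕ) (X : Set G.V) : Prop :=
  (∀ e ∈ G.boundary X ∩ D, ∀ v ∈ X, ∃ f ∈ D, v ∈ G.ends f ∧ c f = c e) ∧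
  ∀ e ∈ G.boundary X ∩ D, ∀ f ∈ G.boundary X ∩ D, e ≠ f → c e ≠ c f

end Basic

/-- A subgraph of `G`: a set of vertices together with a set of edges all of whose
endvertices belong to the vertex set. -/
structure Subgraph (G : Multigraph) where
  verts : Set G.V
  edges : Set G.E
  support : ∀ e ∈ edges, ∀ v, v ∈ G.ends e → v ∈ verts

section Sub

variable (G : Multigraph)

/-- The whole graph, as a subgraph of itself. -/
def top : G.Subgraph := ⟨Set.univ, Set.univ, fun _ _ _ _ => Set.mem_univ _⟩

/-- `H` is a `k`-dense subgraph: it has an odd number of vertices and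
`|E(H)| = (|V(H)|-1)·k/2`. -/
def IsDense (k : ℕ) (H : G.Subgraph) : Prop :=
  Odd H.verts.ncard ∧ 2 * H.edges.ncard = (H.verts.ncard - 1) * k

/-- `H` is a `k`-dense subgraph of `G - F` (the graph obtained by deleting the edges of `F`). -/
def IsDenseIn (F : Set G.E) (k : ℕ) (H : G.Subgraph) : Prop :=
  H.edges ∩ F = ∅ ∧ G.IsDense k H

/-- `H` is a maximal `k`-dense subgraph of `G - F`. -/
def IsMaximalDenseIn (F : Set G.E) (k : ℕ) (H : G.Subgraph) : Prop :=
  G.IsDenseIn F k H ∧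
  ∀ H' : G.Subgraph, G.IsDenseIn F k H' → H.verts ⊆ H'.verts → H.edges ⊆ H'.edges →
    H.verts = H'.verts ∧ H.edges = H'.edges

/-- The density Γ(H) of a subgraph `H` of `G`:
`max { 2|E(H')|/(|V(H')|-1) : H' ⊆ H, |V(H')| ≥ 3 odd }` (and `0` if there is no such `H'`,
since in `ℝ` the supremum of the empty set is `0`). -/
noncomputable def densityOf (H : G.Subgraph) : ℝ :=
  sSup {x : ℝ | ∃ H' : G.Subgraph, H'.verts ⊆ H.verts ∧ H'.edges ⊆ H.edges ∧
    3 ≤ H'.verts.ncard ∧ Odd H'.verts.ncard ∧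
    x = 2 * (H'.edges.ncard : ℝ) / ((H'.verts.ncard : ℝ) - 1)}

/-- The density Γ(G). -/
noncomputable def density : ℝ := G.densityOf G.top

/-- `e` is a `k`-critical edge of `G`: `χ'(G-e) = k < χ'(G) = k+1`. -/
def IsCriticalEdge (k : ℕ) (e : G.E) : Prop :=
  G.chromIndexOn {e}ᶜ = k ∧ G.chromIndex = k + 1

/-- Degree of `v` in the subgraph consisting of the edges in `D`. -/
noncomputable def degreeOn (D : Set G.E) (v : G.V) : ℕ := {e : G.E | e ∈ D ∧ v ∈ G.ends e}.ncard

/-- Maximum degree of the subgraph consisting of the edges in `D`. -/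
noncomputable def maxDegreeOn (D : Set G.E) : ℕ := sSup (Set.range (G.degreeOn D))

/-- Multiplicity of the pair `x,y` in the subgraph consisting of the edges in `D`. -/
noncomputable def multOn (D : Set G.E) (x y : G.V) : ℕ :=
  {e : G.E | e ∈ D ∧ G.ends e = s(x, y)}.ncard

/-- Maximum multiplicity of the subgraph consisting of the edges in `D`. -/
noncomputable def maxMultOn (D : Set G.E) : ℕ := sSup {m : ℕ | ∃ x y : G.V, G.multOn D x y = m}

/-- The simple graph underlying the subgraph of `G` with edge set `D`. -/
def simpleOn (D : Set G.E) : SimpleGraph G.V where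
  Adj a b := a ≠ b ∧ ∃ e ∈ D, G.ends e = s(a, b)
  symm := by
    refine ⟨?_⟩
    rintro a b ⟨hab, e, he, hh⟩
    exact ⟨hab.symm, e, he, hh.trans Sym2.eq_swap⟩
  loopless := by refine ⟨?_⟩; rintro a ⟨h, -⟩; exact h rfl

/-- The diameter (in `ℕ∞`) of the subgraph with vertex set `S` and edge set `D`:
the greatest distance between a pair of its vertices. -/
noncomputable def diamOn (S : Set G.V) (D : Set G.E) : ℕ∞ :=
  sSup {d : ℕ∞ | ∃ u ∈ S, ∃ v ∈ S, (G.simpleOn D).edist u v = d}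

/-- The distance (in `ℕ∞`) between two edges of `G`: the length of a shortest path connecting
an endvertex of `e` and an endvertex of `f`. -/
noncomputable def edgeDist (e f : G.E) : ℕ∞ :=
  sInf {d : ℕ∞ | ∃ u v : G.V, u ∈ G.ends e ∧ v ∈ G.ends f ∧
    (G.simpleOn Set.univ).edist u v = d}

/-- A matching: a set of edges no two of which share an endvertex. -/
def IsMatching (M : Set G.E) : Prop :=
  ∀ e ∈ M, ∀ f ∈ M, e ≠ f → ∀ v : G.V, v ∈ G.ends e → v ∉ G.ends f

/-- An edge `e ∈ E_G(x,y)` is fully `G`-saturated if `d_G(x) = d_G(y) = Δ(G)` and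
`e_G(x,y) = μ(G)`. -/
def IsFullySaturated (e : G.E) : Prop :=
  ∃ x y : G.V, G.ends e = s(x, y) ∧ G.degree x = G.maxDegree ∧ G.degree y = G.maxDegree ∧
    G.mult x y = G.maxMult

/-- One step along a Kempe `(α,β)`-chain: an edge of `D` colored `α` or `β` joining the
two vertices. -/
def chainStep (D : Set G.E) (c : G.E → ℕ) (α β : ℕ) (a b : G.V) : Prop :=
  ∃ e ∈ D, G.ends e = s(a, b) ∧ (c e = α ∨ c e = β)

/-- `u` and `v` lie on the same `(α,β)`-chain, i.e. `P_u(α,β) = P_v(α,β)`. -/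
def sameChain (D : Set G.E) (c : G.E → ℕ) (α β : ℕ) (u v : G.V) : Prop :=
  Relation.ReflTransGen (G.chainStep D c α β) u v

end Sub

/-- The Goldberg–Seymour theorem (proved by Chen, Jing and Zang), as a hypothesis:
every multigraph `G'` with `χ'(G') ≥ Δ(G')+2` satisfies `χ'(G') = ⌈Γ(G')⌉`. -/
def GoldbergSeymour : Prop :=
  ∀ G' : Multigraph, G'.maxDegree + 2 ≤ G'.chromIndex → (G'.chromIndex : ℤ) = ⌈G'.density⌉

/-- A (general) multi-fan at `x` with respect to the edge `e₀ ∈ E_G(x,y₀)` and the coloring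
`c` of the edges in `D` with palette `{1,…,k}`: a sequence `(x, e₀, y₀, e₁, y₁, …, e_p, y_p)`
of vertices and pairwise distinct edges with `e_i ∈ E_G(x, y_i)` and, for `i ≥ 1`,
`c(e_i)` missing at `y_j` for some `j < i`. -/
structure MultiFan (G : Multigraph) (k : ℕ) (D : Set G.E) (c : G.E → ℕ)
    (x : G.V) (e₀ : G.E) (y₀ : G.V) where
  p : ℕ
  edge : Fin (p + 1) → G.E
  vx : Fin (p + 1) → G.V
  edge_zero : edge 0 = e₀
  vx_zero : vx 0 = y₀
  ends_eq : ∀ i, G.ends (edge i) = s(x, vx i)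
  edge_inj : Function.Injective edge
  fan_cond : ∀ i : Fin (p + 1), i ≠ 0 →
    ∃ j : Fin (p + 1), j < i ∧ c (edge i) ∈ G.missingOn k D c (vx j)

namespace MultiFan

variable {G : Multigraph} {k : ℕ} {D : Set G.E} {c : G.E → ℕ} {x : G.V} {e₀ : G.E} {y₀ : G.V}

/-- The vertex set `V(F)` of a multi-fan. -/
def verts (F : MultiFan G k D c x e₀ y₀) : Set G.V := insert x (Set.range F.vx)

/-- `F` is a subsequence of `F'`. -/
def Subseq (F F' : MultiFan G k D c x e₀ y₀) : Prop :=
  ∃ ι : Fin (F.p + 1) → Fin (F'.p + 1), StrictMono ι ∧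
    ∀ i, F'.edge (ι i) = F.edge i ∧ F'.vx (ι i) = F.vx i

/-- `F` is a maximal multi-fan: no multi-fan contains it as a proper subsequence. -/
def IsMaximal (F : MultiFan G k D c x e₀ y₀) : Prop :=
  ∀ F' : MultiFan G k D c x e₀ y₀, F.Subseq F' → F'.p = F.p

/-- `F` contains no `i`-edge. -/
def NoColor (F : MultiFan G k D c x e₀ y₀) (i : ℕ) : Prop :=
  ∀ j, F.edge j ∈ D → c (F.edge j) ≠ i

/-- `F` is a multi-fan without `i`-edges that is maximal among such. -/
def IsMaximalWithout (F : MultiFan G k D c x e₀ y₀) (i : ℕ) : Prop :=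
  F.NoColor i ∧
  ∀ F' : MultiFan G k D c x e₀ y₀, F'.NoColor i → F.Subseq F' → F'.p = F.p

/-- `e_F(x,z)`: the number of edges of the multi-fan `F` joining `x` and `z`. -/
noncomputable def multAt (F : MultiFan G k D c x e₀ y₀) (z : G.V) : ℕ :=
  Nat.card {j : Fin (F.p + 1) // F.vx j = z}

end MultiFan

end Multigraph

namespace MGAux
open Finset
variable (G : Multigraph)

noncomputable def endsF (e : G.E) : Finset G.V :=
  (Set.toFinite {v | v ∈ G.ends e}).toFinset

lemma mem_endsF {e : G.E} {v : G.V} : v ∈ endsF G e ↔ v ∈ G.ends e := by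
  simp [endsF, Set.Finite.mem_toFinset]

lemma card_endsF (e : G.E) : (endsF G e).card = 2 := by
  classical
  obtain ⟨a, b, hends⟩ : ∃ a b, G.ends e = s(a, b) :=
    Sym2.ind (fun a b => ⟨a, b, rfl⟩) (G.ends e)
  have hab : a ≠ b := by
    intro hh
    exact G.loopless e (by rw [hends]; exact Sym2.mk_isDiag_iff.2 hh)
  have he : endsF G e = {a, b} := by
    ext w; simp [mem_endsF, hends, Sym2.mem_iff]
  rw [he, card_insert_of_notMem (by simp [hab]), card_singleton]

lemma card_cover [DecidableEq G.V] {S : Finset G.E}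
    (hS : ∀ e ∈ S, ∀ f ∈ S, e ≠ f → ∀ v, v ∈ G.ends e → v ∉ G.ends f) :
    (S.biUnion (endsF G)).card = 2 * S.card := by
  rw [Finset.card_biUnion]
  · rw [Finset.sum_congr rfl fun e _ => card_endsF G e, Finset.sum_const, smul_eq_mul,
      Nat.mul_comm]
  · intro e he f hf hef
    simp only [Finset.disjoint_left, mem_endsF]
    exact fun v hv => hS e he f hf hef v hv

lemma matching_of_proper {k : ℕ} {c : G.E → ℕ} (hc : G.IsProperColoring k c)
    (D : Finset G.E) (α : ℕ) :
    ∀ e ∈ D.filter (fun e => c e = α), ∀ f ∈ D.filter (fun e => c e = α), e ≠ f →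
      ∀ w, w ∈ G.ends e → w ∉ G.ends f := by
  intro e he f hf hef w hwe hwf
  simp only [Finset.mem_filter] at he hf
  exact hc.2 e (Set.mem_univ e) f (Set.mem_univ f) hef ⟨w, hwe, hwf⟩ (by rw [he.2, hf.2])

lemma fiber_bound [DecidableEq G.V] {k : ℕ} {c : G.E → ℕ}
    (hc : G.IsProperColoring k c) {X : Finset G.V} (hX : Odd X.card)
    {D : Finset G.E} (hD : ∀ e ∈ D, ∀ v, v ∈ G.ends e → v ∈ X) (m : ℕ) :
    2 * (D.filter (fun e => c e = m)).card + 1 ≤ X.card := by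
  set S := D.filter (fun e => c e = m) with hSdef
  have hcov : (S.biUnion (endsF G)).card = 2 * S.card :=
    card_cover G (matching_of_proper G hc D m)
  have hsub : S.biUnion (endsF G) ⊆ X := by
    intro w hw
    obtain ⟨e, he, hwe⟩ := Finset.mem_biUnion.1 hw
    exact hD e (Finset.mem_filter.1 he).1 w ((mem_endsF G).1 hwe)
  have hle : 2 * S.card ≤ X.card := hcov ▸ Finset.card_le_card hsub
  obtain ⟨n, hn⟩ := hX
  omega

lemma sum_fibers {k : ℕ} {c : G.E → ℕ} {D : Finset G.E}
    (hcall : ∀ e ∈ D, c e ∈ Finset.Icc 1 k) :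
    ∑ m ∈ Finset.Icc 1 k, (2 * (D.filter (fun e => c e = m)).card + 1) = 2 * D.card + k := by
  rw [Finset.sum_add_distrib, ← Finset.mul_sum, ← Finset.card_eq_sum_card_fiberwise hcall,
    Finset.sum_const, smul_eq_mul, mul_one, Nat.card_Icc, Nat.add_sub_cancel]

lemma total_bound [DecidableEq G.V] {k : ℕ} {c : G.E → ℕ}
    (hc : G.IsProperColoring k c) {X : Finset G.V} (hX : Odd X.card)
    {D : Finset G.E} (hD : ∀ e ∈ D, ∀ v, v ∈ G.ends e → v ∈ X) :
    2 * D.card + k ≤ X.card * k := by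
  have hcall : ∀ e ∈ D, c e ∈ Finset.Icc 1 k := fun e _ => by
    have := hc.1 e (Set.mem_univ e); simpa [Finset.mem_Icc] using this
  calc 2 * D.card + k
      = ∑ m ∈ Finset.Icc 1 k, (2 * (D.filter (fun e => c e = m)).card + 1) :=
        (sum_fibers G hcall).symm
    _ ≤ ∑ _m ∈ Finset.Icc 1 k, X.card :=
        Finset.sum_le_sum fun m _ => fiber_bound G hc hX hD m
    _ = X.card * k := by
        rw [Finset.sum_const, smul_eq_mul, Nat.card_Icc, Nat.add_sub_cancel, Nat.mul_comm]

lemma fiber_exact [DecidableEq G.V] {k : ℕ} {c : G.E → ℕ}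
    (hc : G.IsProperColoring k c) {X : Finset G.V} (hX : Odd X.card)
    {D : Finset G.E} (hD : ∀ e ∈ D, ∀ v, v ∈ G.ends e → v ∈ X)
    (htot : 2 * D.card + k = X.card * k) :
    ∀ m ∈ Finset.Icc 1 k, 2 * (D.filter (fun e => c e = m)).card + 1 = X.card := by
  have hcall : ∀ e ∈ D, c e ∈ Finset.Icc 1 k := fun e _ => by
    have := hc.1 e (Set.mem_univ e); simpa [Finset.mem_Icc] using this
  have hsum : ∑ m ∈ Finset.Icc 1 k, (2 * (D.filter (fun e => c e = m)).card + 1)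
      = ∑ _m ∈ Finset.Icc 1 k, X.card := by
    rw [sum_fibers G hcall, Finset.sum_const, smul_eq_mul, Nat.card_Icc,
      Nat.add_sub_cancel, htot, Nat.mul_comm]
  exact (Finset.sum_eq_sum_iff_of_le fun m _ => fiber_bound G hc hX hD m).1 hsum

lemma cover_erase [DecidableEq G.V] {k : ℕ} {c : G.E → ℕ}
    (hc : G.IsProperColoring k c) {X : Finset G.V} {D : Finset G.E}
    (hD : ∀ e ∈ D, ∀ v, v ∈ G.ends e → v ∈ X)
    {v : G.V} {α : ℕ} (hvX : v ∈ X) (hαv : ∀ e, v ∈ G.ends e → c e ≠ α)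
    (hodd : Odd X.card) (hDcard : 2 * D.card + k = X.card * k)
    (hαk : α ∈ Finset.Icc 1 k) :
    ∀ w ∈ X, w ≠ v → ∃ e ∈ D, c e = α ∧ w ∈ G.ends e := by
  set S := D.filter (fun e => c e = α) with hSdef
  have hfib : 2 * S.card + 1 = X.card := fiber_exact G hc hodd hD hDcard α hαk
  set C := S.biUnion (endsF G) with hCdef
  have hCsub : C ⊆ X.erase v := by
    intro w hw
    obtain ⟨e, heS, hwe⟩ := Finset.mem_biUnion.1 hw
    have heD := (Finset.mem_filter.1 heS).1
    have heα := (Finset.mem_filter.1 heS).2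
    refine Finset.mem_erase.2 ⟨?_, hD e heD w ((mem_endsF G).1 hwe)⟩
    intro hwv
    exact hαv e (hwv ▸ (mem_endsF G).1 hwe) heα
  have hCcard : C.card = 2 * S.card := card_cover G (matching_of_proper G hc D α)
  have hEr : (X.erase v).card = 2 * S.card := by
    rw [Finset.card_erase_of_mem hvX]; omega
  have hCeq : C = X.erase v :=
    Finset.eq_of_subset_of_card_le hCsub (by rw [hEr, hCcard])
  intro w hwX hwv
  have : w ∈ C := hCeq ▸ Finset.mem_erase.2 ⟨hwv, hwX⟩
  obtain ⟨e, heS, hwe⟩ := Finset.mem_biUnion.1 this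
  exact ⟨e, (Finset.mem_filter.1 heS).1, (Finset.mem_filter.1 heS).2, (mem_endsF G).1 hwe⟩

end MGAux


lemma subgraph_ext_aux {G : Multigraph} {A B : G.Subgraph}
    (h1 : A.verts = B.verts) (h2 : A.edges = B.edges) : A = B := by
  cases A; cases B; cases h1; cases h2; rfl

/-- **Lemma 2.1.** If `χ'(G) = k ≥ Δ(G)+1`, then distinct maximal `k`-dense subgraphs of `G`
are pairwise vertex-disjoint. -/
theorem maximal_dense_subgraphs_disjoint (G : Multigraph) (k : ℕ)
    (hk : G.chromIndex = k) (hΔ : G.maxDegree + 1 ≤ k)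
    (H₁ H₂ : G.Subgraph)
    (h₁ : G.IsMaximalDenseIn ∅ k H₁) (h₂ : G.IsMaximalDenseIn ∅ k H₂)
    (hne : H₁ ≠ H₂) :
    Disjoint H₁.verts H₂.verts := by
  classical
  rw [Set.disjoint_left]
  by_contra hcon
  push_neg at hcon
  obtain ⟨v, hv1, hv2⟩ := hcon
  -- a proper k-edge-coloring of G exists
  have hSne : {n | ∃ c, G.IsProperColoringOn n Set.univ c}.Nonempty := by
    refine ⟨Fintype.card G.E, fun e => (Fintype.equivFin G.E e).val + 1, ?_, ?_⟩
    · intro e _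
      exact ⟨Nat.le_add_left 1 _, Nat.succ_le_of_lt (Fintype.equivFin G.E e).isLt⟩
    · intro e _ f _ hef _ h
      apply hef
      have h' : ((Fintype.equivFin G.E e : Fin _) : ℕ) + 1
          = ((Fintype.equivFin G.E f : Fin _) : ℕ) + 1 := h
      exact (Fintype.equivFin G.E).injective (Fin.ext (by omega))
  obtain ⟨c, hc⟩ : ∃ c, G.IsProperColoringOn k Set.univ c := by
    have h0 := Nat.sInf_mem hSne
    rw [Multigraph.chromIndex, Multigraph.chromIndexOn] at hk
    rwa [hk] at h0
  have hc' : G.IsProperColoring k c := hc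
  -- finsets
  set V1 := (Set.toFinite H₁.verts).toFinset with hV1
  set V2 := (Set.toFinite H₂.verts).toFinset with hV2
  set E1 := (Set.toFinite H₁.edges).toFinset with hE1
  set E2 := (Set.toFinite H₂.edges).toFinset with hE2
  have hmV1 : ∀ w, w ∈ V1 ↔ w ∈ H₁.verts := fun w => Set.Finite.mem_toFinset _
  have hmV2 : ∀ w, w ∈ V2 ↔ w ∈ H₂.verts := fun w => Set.Finite.mem_toFinset _
  have hmE1 : ∀ e, e ∈ E1 ↔ e ∈ H₁.edges := fun e => Set.Finite.mem_toFinset _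
  have hmE2 : ∀ e, e ∈ E2 ↔ e ∈ H₂.edges := fun e => Set.Finite.mem_toFinset _
  have hv1' : v ∈ V1 := (hmV1 v).2 hv1
  have hv2' : v ∈ V2 := (hmV2 v).2 hv2
  have hcV1 : H₁.verts.ncard = V1.card := Set.ncard_eq_toFinset_card _ _
  have hcV2 : H₂.verts.ncard = V2.card := Set.ncard_eq_toFinset_card _ _
  have hcE1 : H₁.edges.ncard = E1.card := Set.ncard_eq_toFinset_card _ _
  have hcE2 : H₂.edges.ncard = E2.card := Set.ncard_eq_toFinset_card _ _
  have hodd1' : Odd V1.card := hcV1 ▸ h₁.1.2.1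
  have hodd2' : Odd V2.card := hcV2 ▸ h₂.1.2.1
  have hdense1 : 2 * E1.card = (V1.card - 1) * k := by
    rw [← hcE1, ← hcV1]; exact h₁.1.2.2
  have hdense2 : 2 * E2.card = (V2.card - 1) * k := by
    rw [← hcE2, ← hcV2]; exact h₂.1.2.2
  have hd1 : 2 * E1.card + k = V1.card * k := by
    obtain ⟨n, hn⟩ := hodd1'
    rw [hdense1, hn, Nat.add_sub_cancel, Nat.add_mul, one_mul]
  have hd2 : 2 * E2.card + k = V2.card * k := by
    obtain ⟨n, hn⟩ := hodd2'
    rw [hdense2, hn, Nat.add_sub_cancel, Nat.add_mul, one_mul]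
  have hs1 : ∀ e ∈ E1, ∀ w, w ∈ G.ends e → w ∈ V1 := fun e he w hw =>
    (hmV1 w).2 (H₁.support e ((hmE1 e).1 he) w hw)
  have hs2 : ∀ e ∈ E2, ∀ w, w ∈ G.ends e → w ∈ V2 := fun e he w hw =>
    (hmV2 w).2 (H₂.support e ((hmE2 e).1 he) w hw)
  -- a color α missing at v
  set Av : Finset G.E := Finset.univ.filter (fun e => v ∈ G.ends e) with hAv
  have hAvcard : Av.card ≤ k - 1 := by
    have h1 : G.degree v ≤ G.maxDegree :=
      le_csSup (Set.Finite.bddAbove (Set.finite_range _)) ⟨v, rfl⟩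
    have h2 : G.degree v = Av.card := by
      rw [Multigraph.degree, Set.ncard_eq_toFinset_card _ (Set.toFinite _)]
      congr 1
      ext e
      simp [hAv, Set.Finite.mem_toFinset]
    omega
  obtain ⟨α, hαk, hαA⟩ : ∃ α ∈ Finset.Icc 1 k, α ∉ Av.image c := by
    by_contra hno
    push_neg at hno
    have hsub : Finset.Icc 1 k ⊆ Av.image c := fun a ha => hno a ha
    have h3 := Finset.card_le_card hsub
    have h4 := Finset.card_image_le (s := Av) (f := c)
    rw [Nat.card_Icc, Nat.add_sub_cancel] at h3
    omega
  have hαv : ∀ e, v ∈ G.ends e → c e ≠ α := by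
    intro e hve heq
    exact hαA (Finset.mem_image.2 ⟨e, Finset.mem_filter.2 ⟨Finset.mem_univ e, hve⟩, heq⟩)
  have hA1 := MGAux.cover_erase G hc' hs1 hv1' hαv hodd1' hd1 hαk
  have hA2 := MGAux.cover_erase G hc' hs2 hv2' hαv hodd2' hd2 hαk
  -- the intersection has odd cardinality
  set I := V1 ∩ V2 with hI
  have hvI : v ∈ I := Finset.mem_inter.2 ⟨hv1', hv2'⟩
  set EI := E1 ∩ E2 with hEIdef
  have hsI : ∀ e ∈ EI, ∀ w, w ∈ G.ends e → w ∈ I := by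
    intro e he w hw
    exact Finset.mem_inter.2
      ⟨hs1 e (Finset.mem_inter.1 he).1 w hw, hs2 e (Finset.mem_inter.1 he).2 w hw⟩
  set SI := EI.filter (fun e => c e = α) with hSIdef
  have hCeq : SI.biUnion (MGAux.endsF G) = I.erase v := by
    apply Finset.Subset.antisymm
    · intro w hw
      obtain ⟨e, heS, hwe⟩ := Finset.mem_biUnion.1 hw
      have hwe' := (MGAux.mem_endsF G).1 hwe
      have heEI := (Finset.mem_filter.1 heS).1
      refine Finset.mem_erase.2 ⟨?_, hsI e heEI w hwe'⟩
      intro hwv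
      exact hαv e (hwv ▸ hwe') (Finset.mem_filter.1 heS).2
    · intro w hw
      obtain ⟨hwv, hwI⟩ := Finset.mem_erase.1 hw
      obtain ⟨hw1, hw2⟩ := Finset.mem_inter.1 hwI
      obtain ⟨e₁, he₁, hc₁, hwe₁⟩ := hA1 w hw1 hwv
      obtain ⟨e₂, he₂, hc₂, hwe₂⟩ := hA2 w hw2 hwv
      have he12 : e₁ = e₂ := by
        by_contra hne12
        exact hc'.2 e₁ (Set.mem_univ _) e₂ (Set.mem_univ _) hne12 ⟨w, hwe₁, hwe₂⟩
          (by rw [hc₁, hc₂])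
      refine Finset.mem_biUnion.2 ⟨e₁, ?_, (MGAux.mem_endsF G).2 hwe₁⟩
      exact Finset.mem_filter.2 ⟨Finset.mem_inter.2 ⟨he₁, he12 ▸ he₂⟩, hc₁⟩
  have hcovSI : (SI.biUnion (MGAux.endsF G)).card = 2 * SI.card :=
    MGAux.card_cover G (MGAux.matching_of_proper G hc' EI α)
  have htI : Odd I.card := by
    have h1 : (I.erase v).card = I.card - 1 := Finset.card_erase_of_mem hvI
    have h2 : I.card - 1 = 2 * SI.card := by rw [← h1, ← hCeq, hcovSI]
    have hIpos : 0 < I.card := Finset.card_pos.2 ⟨v, hvI⟩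
    rw [Nat.odd_iff]
    omega
  have hEIbd : 2 * EI.card + k ≤ I.card * k := MGAux.total_bound G hc' htI hsI
  -- the union
  set U := V1 ∪ V2 with hU
  set EU := E1 ∪ E2 with hEUdef
  have hcardU : U.card + I.card = V1.card + V2.card := Finset.card_union_add_card_inter V1 V2
  have hcardE : EU.card + EI.card = E1.card + E2.card := Finset.card_union_add_card_inter E1 E2
  have hoddU : Odd U.card := by
    obtain ⟨a, ha⟩ := hodd1'
    obtain ⟨b, hb⟩ := hodd2'
    obtain ⟨d, hd⟩ := htI
    rw [Nat.odd_iff]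
    omega
  have hsU : ∀ e ∈ EU, ∀ w, w ∈ G.ends e → w ∈ U := by
    intro e he w hw
    rcases Finset.mem_union.1 he with h | h
    · exact Finset.mem_union_left _ (hs1 e h w hw)
    · exact Finset.mem_union_right _ (hs2 e h w hw)
  have hEUbd : 2 * EU.card + k ≤ U.card * k := MGAux.total_bound G hc' hoddU hsU
  have hEUeq : 2 * EU.card + k = U.card * k := by
    have h1 : 2 * (E1.card : ℤ) + k = V1.card * k := by exact_mod_cast hd1
    have h2 : 2 * (E2.card : ℤ) + k = V2.card * k := by exact_mod_cast hd2
    have h3 : 2 * (EI.card : ℤ) + k ≤ I.card * k := by exact_mod_cast hEIbd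
    have h4 : 2 * (EU.card : ℤ) + k ≤ U.card * k := by exact_mod_cast hEUbd
    have h5 : (EU.card : ℤ) + EI.card = E1.card + E2.card := by exact_mod_cast hcardE
    have h6 : (U.card : ℤ) + I.card = V1.card + V2.card := by exact_mod_cast hcardU
    have key : 2 * (EU.card : ℤ) + k + (2 * (EI.card : ℤ) + k)
        = U.card * k + I.card * k := by
      linear_combination 2 * h5 + h1 + h2 - (k : ℤ) * h6
    have hfin : 2 * (EU.card : ℤ) + k = U.card * k := by linarith
    exact_mod_cast hfin
  -- the union subgraph is k-dense, contradicting maximality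
  have hsupU : ∀ e ∈ H₁.edges ∪ H₂.edges, ∀ w, w ∈ G.ends e → w ∈ H₁.verts ∪ H₂.verts := by
    intro e he w hw
    rcases he with h | h
    · exact Or.inl (H₁.support e h w hw)
    · exact Or.inr (H₂.support e h w hw)
  set HU : G.Subgraph := ⟨H₁.verts ∪ H₂.verts, H₁.edges ∪ H₂.edges, hsupU⟩ with hHU
  have hUverts : HU.verts.ncard = U.card := by
    rw [Set.ncard_eq_toFinset_card _ (Set.toFinite _)]
    congr 1
    ext w
    simp only [Set.Finite.mem_toFinset, Set.mem_union, hHU, hU, Finset.mem_union]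
    rw [hmV1 w, hmV2 w]
  have hUedges : HU.edges.ncard = EU.card := by
    rw [Set.ncard_eq_toFinset_card _ (Set.toFinite _)]
    congr 1
    ext e
    simp only [Set.Finite.mem_toFinset, Set.mem_union, hHU, hEUdef, Finset.mem_union]
    rw [hmE1 e, hmE2 e]
  have hHUdense : G.IsDenseIn ∅ k HU := by
    refine ⟨Set.inter_empty _, ?_, ?_⟩
    · rw [hUverts]; exact hoddU
    · rw [hUverts, hUedges]
      obtain ⟨n, hn⟩ := hoddU
      rw [hn, Nat.add_sub_cancel]
      rw [hn] at hEUeq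
      have h2 : (2 * n + 1) * k = 2 * n * k + k := by rw [Nat.add_mul, one_mul]
      exact Nat.add_right_cancel (hEUeq.trans h2)
  have hm1 := h₁.2 HU hHUdense Set.subset_union_left Set.subset_union_left
  have hm2 := h₂.2 HU hHUdense Set.subset_union_right Set.subset_union_right
  exact hne (subgraph_ext_aux (hm1.1.trans hm2.1.symm) (hm1.2.trans hm2.2.symm))
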